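/- For every real number ξ and every complex root λ of the quadratic λ² + ν̄ξ²λ + c̄²ξ² = 0, one has Re λ ≤ −min( (ν̄/2)ξ² , c̄²/ν̄ ). -/
import Mathlib


/-- Unified spectral bound: for every real `ξ`, every complex root of
`λ² + ν̄ξ²λ + c̄²ξ² = 0` satisfies `Re λ ≤ −min((ν̄/2)ξ², c̄²/ν̄)`. -/
theorem root_re_bound (c ν : ℝ) (hc : 0 < c) (hν : 0 < ν) (ξ : ℝ) (lam : ℂ)
    (hroot : lam ^ 2 + (ν : ℂ) * (ξ : ℂ) ^ 2 * lam + (c : ℂ) ^ 2 * (ξ : ℂ) ^ 2 = 0) :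
    lam.re ≤ -min ((ν / 2) * ξ ^ 2) (c ^ 2 / ν) := by
  set x := lam.re with hx
  set y := lam.im with hy
  have hre : x ^ 2 - y ^ 2 + ν * ξ ^ 2 * x + c ^ 2 * ξ ^ 2 = 0 := by
    have h := congrArg Complex.re hroot
    simp [Complex.add_re, Complex.mul_re, Complex.mul_im, pow_two, ← hx, ← hy] at h
    nlinarith [h]
  have him : y * (2 * x + ν * ξ ^ 2) = 0 := by
    have h := congrArg Complex.im hroot
    simp [Complex.add_im, Complex.mul_re, Complex.mul_im, pow_two, ← hx, ← hy] at h
    nlinarith [h]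
  rcases mul_eq_zero.mp him with hy0 | hx0
  · -- real root case
    rcases eq_or_ne ξ 0 with hξ | hξ
    · subst hξ
      have hx2 : x ^ 2 - y ^ 2 = 0 := by nlinarith [hre]
      have : x = 0 := by nlinarith [sq_nonneg x, sq_nonneg y, hy0]
      have hpos : (0:ℝ) ≤ c ^ 2 / ν := by positivity
      simp [this, min_eq_left hpos]
    · have hξ2 : (0 : ℝ) < ξ ^ 2 := by positivity
      have h1 : ν * x ≤ -c ^ 2 := by nlinarith [sq_nonneg x, hre]
      have h2 : x ≤ -(c ^ 2 / ν) := by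
        rw [show -(c ^ 2 / ν) = (-c ^ 2) / ν from (neg_div _ _).symm, le_div_iff₀ hν]
        nlinarith
      have h3 : min ((ν / 2) * ξ ^ 2) (c ^ 2 / ν) ≤ c ^ 2 / ν := min_le_right _ _
      linarith
  · have h3 : min ((ν / 2) * ξ ^ 2) (c ^ 2 / ν) ≤ (ν / 2) * ξ ^ 2 := min_le_left _ _
    linarith
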